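/- Let X ∈ ℝ^{m×n} have rank r̲, and let X† be its Moore–Penrose inverse. Then for every Z ∈ ℝ^{m×n}, the matrix XX†Z + ZX†X − XX†ZX†X is the orthogonal projection (in Frobenius inner product) of Z onto the subspace ℝ^{m×m}X + Xℝ^{n×n}, and (I_m − XX†)Z(I_n − X†X) is the orthogonal projection of Z onto the orthogonal complement of that subspace. -/
import Mathlib


open Matrix

attribute [local instance] Matrix.frobeniusNormedAddCommGroup Matrix.frobeniusNormedSpace

abbrev Mat (m n : ℕ) := Matrix (Fin m) (Fin n) ℝ

/-- Frobenius inner product `⟨X, Y⟩ = tr (Yᵀ X)`. -/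
noncomputable def froInner {m n : ℕ} (X Y : Mat m n) : ℝ := Matrix.trace (Yᵀ * X)

/-- A cone: closed under multiplication by nonnegative scalars. -/
def IsConeSet {m n : ℕ} (C : Set (Mat m n)) : Prop :=
  ∀ Y ∈ C, ∀ a : ℝ, 0 ≤ a → a • Y ∈ C

/-- The set of projections (nearest points in Frobenius norm) of `X` onto `C`. -/
noncomputable def projSet {m n : ℕ} (C : Set (Mat m n)) (X : Mat m n) : Set (Mat m n) :=
  {Y | Y ∈ C ∧ ∀ Z ∈ C, ‖X - Y‖ ≤ ‖X - Z‖}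

/-- Frobenius distance from `X` to the set `C`. -/
noncomputable def distTo {m n : ℕ} (C : Set (Mat m n)) (X : Mat m n) : ℝ :=
  sInf ((fun Z => ‖X - Z‖) '' C)

/-- The polar cone of `C`. -/
def polarCone {m n : ℕ} (C : Set (Mat m n)) : Set (Mat m n) :=
  {Y | ∀ X ∈ C, froInner X Y ≤ 0}


lemma keyOrth {m n : ℕ} (X : Mat m n) (Xd : Matrix (Fin n) (Fin m) ℝ)
    (h1 : X * Xd * X = X) (h3 : (X * Xd)ᵀ = X * Xd) (h4 : (Xd * X)ᵀ = Xd * X)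
    (Z : Mat m n) (A : Matrix (Fin m) (Fin m) ℝ) (B : Matrix (Fin n) (Fin n) ℝ) :
    froInner ((1 - X * Xd) * Z * (1 - Xd * X)) (A * X + X * B) = 0 := by
  have hQX : (1 - Xd * X) * Xᵀ = 0 := by
    have e : (Xd * X) * Xᵀ = Xᵀ := by
      calc (Xd * X) * Xᵀ = (Xd * X)ᵀ * Xᵀ := by rw [h4]
        _ = (X * (Xd * X))ᵀ := by rw [← Matrix.transpose_mul]
        _ = Xᵀ := by rw [← Matrix.mul_assoc, h1]
    rw [Matrix.sub_mul, Matrix.one_mul, e, sub_self]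
  have hXP : Xᵀ * (1 - X * Xd) = 0 := by
    have e : Xᵀ * (X * Xd) = Xᵀ := by
      calc Xᵀ * (X * Xd) = Xᵀ * (X * Xd)ᵀ := by rw [h3]
        _ = ((X * Xd) * X)ᵀ := by rw [← Matrix.transpose_mul]
        _ = Xᵀ := by rw [h1]
    rw [Matrix.mul_sub, Matrix.mul_one, e, sub_self]
  have hMX : (1 - X * Xd) * Z * (1 - Xd * X) * Xᵀ = 0 := by
    rw [Matrix.mul_assoc, hQX, Matrix.mul_zero]
  have hXM : Xᵀ * ((1 - X * Xd) * Z * (1 - Xd * X)) = 0 := by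
    rw [← Matrix.mul_assoc, ← Matrix.mul_assoc, hXP, Matrix.zero_mul, Matrix.zero_mul]
  unfold froInner
  rw [Matrix.transpose_add, Matrix.transpose_mul, Matrix.transpose_mul, Matrix.add_mul,
    Matrix.trace_add]
  rw [Matrix.mul_assoc Xᵀ Aᵀ, Matrix.trace_mul_comm, Matrix.mul_assoc, hMX,
    Matrix.mul_zero, Matrix.trace_zero, Matrix.mul_assoc, hXM, Matrix.mul_zero,
    Matrix.trace_zero, add_zero]

lemma expandRes {m n : ℕ} (X : Mat m n) (Xd : Matrix (Fin n) (Fin m) ℝ) (Z : Mat m n) :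
    Z - (X * Xd * Z + Z * (Xd * X) - X * Xd * Z * (Xd * X))
      = (1 - X * Xd) * Z * (1 - Xd * X) := by
  rw [Matrix.sub_mul, Matrix.one_mul, Matrix.mul_sub, Matrix.mul_one, Matrix.sub_mul]
  abel

theorem stmt11 {m n : ℕ} (X : Mat m n) (Xd : Matrix (Fin n) (Fin m) ℝ)
    (h1 : X * Xd * X = X) (h2 : Xd * X * Xd = Xd)
    (h3 : (X * Xd)ᵀ = X * Xd) (h4 : (Xd * X)ᵀ = Xd * X) (Z : Mat m n) :
    ((∃ A : Matrix (Fin m) (Fin m) ℝ, ∃ B : Matrix (Fin n) (Fin n) ℝ,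
        X * Xd * Z + Z * (Xd * X) - X * Xd * Z * (Xd * X) = A * X + X * B) ∧
     (∀ (A : Matrix (Fin m) (Fin m) ℝ) (B : Matrix (Fin n) (Fin n) ℝ),
        froInner (Z - (X * Xd * Z + Z * (Xd * X) - X * Xd * Z * (Xd * X))) (A * X + X * B) = 0)) ∧
    ((∀ (A : Matrix (Fin m) (Fin m) ℝ) (B : Matrix (Fin n) (Fin n) ℝ),
        froInner ((1 - X * Xd) * Z * (1 - Xd * X)) (A * X + X * B) = 0) ∧
     (∃ A : Matrix (Fin m) (Fin m) ℝ, ∃ B : Matrix (Fin n) (Fin n) ℝ,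
        Z - (1 - X * Xd) * Z * (1 - Xd * X) = A * X + X * B)) := by
  have hres := expandRes X Xd Z
  have hsum : X * Xd * Z + Z * (Xd * X) - X * Xd * Z * (Xd * X)
      = ((1 - X * Xd) * Z * Xd) * X + X * (Xd * Z) := by
    rw [Matrix.sub_mul, Matrix.one_mul, Matrix.sub_mul, Matrix.sub_mul, Matrix.mul_assoc Z Xd X,
      Matrix.mul_assoc (X * Xd * Z) Xd X, ← Matrix.mul_assoc X Xd Z]
    abel
  exact ⟨⟨⟨_, _, hsum⟩, fun A B => by rw [hres]; exact keyOrth X Xd h1 h3 h4 Z A B⟩,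
    ⟨fun A B => keyOrth X Xd h1 h3 h4 Z A B,
     ⟨_, _, by rw [← hres, sub_sub_cancel]; exact hsum⟩⟩⟩
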